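/- Let y be a string over an alphabet Σ. A string x ∈ Σ* is a maximal repeat of y if and only if its reversal x^R is a maximal repeat of the reversed string y^R. (Consequently, the CDAWGs of y and of y^R can share the same node set, yielding the symmetric CDAWG.) -/

import Mathlib

open List

/-- 1-indexed beginning positions of occurrences of `x` in `y`:
`BegPos y x = { i | 1 ≤ i ≤ |y| - |x| + 1, y[i..i+|x|-1] = x }`. -/
def BegPos {α : Type*} (y x : List α) : Set ℕ :=
  {i | 1 ≤ i ∧ i ≤ y.length - x.length + 1 ∧ x <+: y.drop (i - 1)}

/-- 1-indexed ending positions of occurrences of `x` in `y`: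
`EndPos y x = { i | |x| ≤ i ≤ |y|, y[i-|x|+1..i] = x }`. -/
def EndPos {α : Type*} (y x : List α) : Set ℕ :=
  {i | x.length ≤ i ∧ i ≤ y.length ∧ x <:+ y.take i}

/-- `IsLrepOf y w x` means `w = Lrep_y(x)`: `w` is left-equivalent to `x` in `y`
(`BegPos y w = BegPos y x`) and is the longest such string. -/
def IsLrepOf {α : Type*} (y w x : List α) : Prop :=
  BegPos y w = BegPos y x ∧ ∀ v : List α, BegPos y v = BegPos y x → v.length ≤ w.length

/-- `IsRrepOf y w x` means `w = Rrep_y(x)`: `w` is right-equivalent to `x` in `y`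
(`EndPos y w = EndPos y x`) and is the longest such string. -/
def IsRrepOf {α : Type*} (y w x : List α) : Prop :=
  EndPos y w = EndPos y x ∧ ∀ v : List α, EndPos y v = EndPos y x → v.length ≤ w.length

/-- `x` is a minimal absent word of `y`: `x` is not a substring of `y` and
every proper substring of `x` is a substring of `y`. -/
def IsMAW {α : Type*} (y x : List α) : Prop :=
  ¬ x <:+: y ∧ ∀ w : List α, w <:+: x → w ≠ x → w <:+: y

/-- x is a maximal repeat of y: x occurs at least twice in y and extending x
by any character on either side strictly decreases its number of occurrences. -/
def MaximalRepeat {α : Type*} (y x : List α) : Prop :=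
  x <:+: y ∧ 2 ≤ (BegPos y x).ncard ∧
    (∀ b : α, (BegPos y (x ++ [b])).ncard < (BegPos y x).ncard) ∧
    (∀ a : α, (BegPos y (a :: x)).ncard < (BegPos y x).ncard)

lemma mem_BegPos_iff {α : Type*} (y x : List α) (i : ℕ) :
    i ∈ BegPos y x ↔ ∃ u v : List α, y = u ++ x ++ v ∧ i = u.length + 1 := by
  constructor
  · rintro ⟨h1, h2, v, hv⟩
    refine ⟨y.take (i - 1), v, ?_, ?_⟩
    · conv_lhs => rw [← List.take_append_drop (i - 1) y, ← hv]
      simp [List.append_assoc]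
    · have hxy : x.length ≤ y.length := by
        have := congrArg List.length hv
        simp at this
        have := (List.length_drop (i := i - 1) (l := y)) ▸ this
        omega
      have : i - 1 ≤ y.length := by omega
      rw [List.length_take]
      omega
  · rintro ⟨u, v, rfl, rfl⟩
    refine ⟨by omega, by simp; omega, ?_⟩
    simp [List.drop_append]

lemma BegPos_reverse_eq_image {α : Type*} (y x : List α) :
    BegPos y.reverse x.reverse =
      (fun i => y.length - x.length + 2 - i) '' BegPos y x := by
  ext j
  constructor
  · intro hj
    obtain ⟨u, v, hyx, rfl⟩ := (mem_BegPos_iff _ _ _).mp hj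
    have hy : y = v.reverse ++ x ++ u.reverse := by
      have := congrArg List.reverse hyx
      simpa [List.reverse_append, List.append_assoc] using this
    refine ⟨v.length + 1, (mem_BegPos_iff _ _ _).mpr ⟨v.reverse, u.reverse, hy, by simp⟩, ?_⟩
    have hlen := congrArg List.length hyx
    simp at hlen
    show y.length - x.length + 2 - (v.length + 1) = u.length + 1
    omega
  · rintro ⟨i, hi, rfl⟩
    obtain ⟨u, v, rfl, rfl⟩ := (mem_BegPos_iff _ _ _).mp hi
    refine (mem_BegPos_iff _ _ _).mpr ⟨v.reverse, u.reverse, by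
      simp [List.reverse_append, List.append_assoc], ?_⟩
    simp
    omega

lemma ncard_BegPos_reverse {α : Type*} (y x : List α) :
    (BegPos y.reverse x.reverse).ncard = (BegPos y x).ncard := by
  rw [BegPos_reverse_eq_image]
  apply Set.ncard_image_of_injOn
  intro i hi j hj hij
  obtain ⟨u, v, hy, rfl⟩ := (mem_BegPos_iff _ _ _).mp hi
  obtain ⟨u', v', hy', rfl⟩ := (mem_BegPos_iff _ _ _).mp hj
  have h1 := congrArg List.length hy
  have h2 := congrArg List.length hy'
  simp at h1 h2 hij
  omega

lemma maximal_repeat_rev_mp {α : Type*} (y x : List α) :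
    MaximalRepeat y x → MaximalRepeat y.reverse x.reverse := by
  rintro ⟨hinf, h2, hb, ha⟩
  refine ⟨List.reverse_infix.mpr hinf, by rwa [ncard_BegPos_reverse], ?_, ?_⟩
  · intro b
    have : x.reverse ++ [b] = (b :: x).reverse := by simp
    rw [this, ncard_BegPos_reverse, ncard_BegPos_reverse]
    exact ha b
  · intro a
    have : a :: x.reverse = (x ++ [a]).reverse := by simp
    rw [this, ncard_BegPos_reverse, ncard_BegPos_reverse]
    exact hb a

theorem maximal_repeat_reverse {α : Type*} (y x : List α) :
    MaximalRepeat y x ↔ MaximalRepeat y.reverse x.reverse := by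
  constructor
  · exact maximal_repeat_rev_mp y x
  · intro h
    simpa using maximal_repeat_rev_mp y.reverse x.reverse h
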